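/- arXiv:1401.3187 — 3 statements merged into one kernel-verified Lean document; each statement's English description precedes it below -/
import Mathlib

section
/- Let G be a connected bipartite multigraph with bipartition V₁ ∪ V₂, and let A be an imprimitive block for Aut(G) with A ∩ V₁ ≠ ∅ and A ∩ V₂ ≠ ∅. If G is half-transitive, then the induced sub-multigraph G[A] is half-transitive (with respect to the bipartition (A ∩ V₁, A ∩ V₂)). -/
/-- A multigraph: multiple edges allowed (recorded as edge multiplicities), no loops. -/
structure Multigraph (V : Type*) where
  mult : V → V → ℕ
  symm : ∀ u v, mult u v = mult v u
  loopless : ∀ v, mult v v = 0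

namespace Multigraph

variable {V : Type*}

/-- Adjacency: at least one edge between `u` and `v`. -/
def Adj (G : Multigraph V) (u v : V) : Prop := 0 < G.mult u v

instance (G : Multigraph V) (v : V) : DecidablePred (G.Adj v) :=
  fun u => inferInstanceAs (Decidable (0 < G.mult v u))

/-- Reachability by walks. -/
def Reachable (G : Multigraph V) : V → V → Prop := Relation.ReflTransGen G.Adj

/-- A multigraph is connected if it is nonempty and every two vertices are joined by a walk. -/
def Connected (G : Multigraph V) : Prop := Nonempty V ∧ ∀ u v, G.Reachable u v

/-- An automorphism of a multigraph: a permutation preserving all edge multiplicities. -/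
def Aut (G : Multigraph V) : Type _ :=
  {e : Equiv.Perm V // ∀ u v, G.mult (e u) (e v) = G.mult u v}

/-- A set of edges of `G`, given by sub-multiplicities. -/
structure EdgeSub (G : Multigraph V) where
  f : V → V → ℕ
  symm : ∀ u v, f u v = f v u
  le : ∀ u v, f u v ≤ G.mult u v

/-- The multigraph obtained by deleting the edge set `F`. -/
def deleteEdges (G : Multigraph V) (F : G.EdgeSub) : Multigraph V where
  mult u v := G.mult u v - F.f u v
  symm u v := by (try dsimp only); rw [G.symm u v, F.symm u v]
  loopless v := by simp [G.loopless v]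

/-- `F` is an edge-cut if removing it disconnects `G`. -/
def IsEdgeCut (G : Multigraph V) (F : G.EdgeSub) : Prop := ¬ (G.deleteEdges F).Connected

/-- `F` is a restricted edge-cut if removing it disconnects `G` and leaves no isolated vertex. -/
def IsRestrictedEdgeCut (G : Multigraph V) (F : G.EdgeSub) : Prop :=
  G.IsEdgeCut F ∧ ∀ v, ∃ u, (G.deleteEdges F).Adj v u

/-- `G` is bipartite with parts `V₁`, `V₂`. -/
def IsBipartition [DecidableEq V] [Fintype V] (G : Multigraph V) (V₁ V₂ : Finset V) : Prop :=
  Disjoint V₁ V₂ ∧ V₁ ∪ V₂ = Finset.univ ∧ ∀ u v, G.Adj u v → (u ∈ V₁ ↔ v ∈ V₂)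

/-- A bipartite multigraph is half-transitive if `Aut G` is transitive on each part. -/
def IsHalfTransitive [DecidableEq V] [Fintype V] (G : Multigraph V) (V₁ V₂ : Finset V) : Prop :=
  G.IsBipartition V₁ V₂ ∧
  (∀ u ∈ V₁, ∀ v ∈ V₁, ∃ e : G.Aut, e.1 u = v) ∧
  (∀ u ∈ V₂, ∀ v ∈ V₂, ∃ e : G.Aut, e.1 u = v)

/-- An imprimitive block for `Aut G`. -/
def IsImprimitiveBlock [DecidableEq V] (G : Multigraph V) (A : Finset V) [Fintype V] : Prop :=
  A.Nonempty ∧ A ≠ Finset.univ ∧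
  ∀ e : G.Aut, A.image e.1 = A ∨ Disjoint (A.image e.1) A

/-- The induced sub-multigraph on a vertex set `S`. -/
def induce (G : Multigraph V) (S : Finset V) : Multigraph {x // x ∈ S} where
  mult a b := G.mult a.1 b.1
  symm a b := G.symm a.1 b.1
  loopless a := G.loopless a.1

section Fin

variable [Fintype V] [DecidableEq V]

/-- The degree of a vertex (counting multiplicities). -/
def degree (G : Multigraph V) (v : V) : ℕ := ∑ u, G.mult v u

/-- The minimum degree `δ(G)`. -/
noncomputable def minDegree (G : Multigraph V) : ℕ := sInf {n | ∃ v, G.degree v = n}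

/-- The maximum edge multiplicity `μ(G)`. -/
def maxMult (G : Multigraph V) : ℕ := Finset.univ.sup fun p : V × V => G.mult p.1 p.2

/-- `d(A)`: the number of edges between `A` and its complement. -/
def cut (G : Multigraph V) (A : Finset V) : ℕ := ∑ u ∈ A, ∑ v ∈ Aᶜ, G.mult u v

/-- The number of edges in an edge set. -/
def EdgeSub.card {G : Multigraph V} (F : G.EdgeSub) : ℕ := (∑ u, ∑ v, F.f u v) / 2

/-- The edge-boundary `N(A)` of a vertex set `A`, as an edge set. -/
def boundary (G : Multigraph V) (A : Finset V) : G.EdgeSub where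
  f u v := if (u ∈ A ∧ v ∉ A) ∨ (v ∈ A ∧ u ∉ A) then G.mult u v else 0
  symm u v := by
    try dsimp only
    by_cases h1 : u ∈ A <;> by_cases h2 : v ∈ A <;> simp [h1, h2, G.symm u v]
  le u v := by (try dsimp only); split_ifs <;> simp

/-- The edge-connectivity `λ(G)`. -/
noncomputable def edgeConn (G : Multigraph V) : ℕ :=
  sInf {n | ∃ F : G.EdgeSub, G.IsEdgeCut F ∧ F.card = n}

/-- The restricted edge-connectivity `λ'(G)`. -/
noncomputable def rEdgeConn (G : Multigraph V) : ℕ :=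
  sInf {n | ∃ F : G.EdgeSub, G.IsRestrictedEdgeCut F ∧ F.card = n}

/-- The minimum edge degree `ξ(G) = min {d(u)+d(v)-2μ(uv) : uv ∈ E}`. -/
noncomputable def minEdgeDegree (G : Multigraph V) : ℕ :=
  sInf {n | ∃ u v, G.Adj u v ∧ n = G.degree u + G.degree v - 2 * G.mult u v}

/-- A `λ`-fragment: a vertex set whose edge-boundary is a minimum edge-cut. -/
def IsFragment (G : Multigraph V) (A : Finset V) : Prop :=
  A.Nonempty ∧ Aᶜ.Nonempty ∧ G.IsEdgeCut (G.boundary A) ∧ G.cut A = G.edgeConn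

/-- A `λ`-atom: a `λ`-fragment of minimum cardinality. -/
def IsAtom (G : Multigraph V) (A : Finset V) : Prop :=
  G.IsFragment A ∧ ∀ B : Finset V, G.IsFragment B → A.card ≤ B.card

/-- A strict `λ`-fragment: a `λ`-fragment `C` with `2 ≤ |C| ≤ |V| - 2`. -/
def IsStrictFragment (G : Multigraph V) (A : Finset V) : Prop :=
  G.IsFragment A ∧ 2 ≤ A.card ∧ A.card ≤ Fintype.card V - 2

/-- A `λ`-superatom: a strict `λ`-fragment of minimum cardinality. -/
def IsSuperAtom (G : Multigraph V) (A : Finset V) : Prop :=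
  G.IsStrictFragment A ∧ ∀ B : Finset V, G.IsStrictFragment B → A.card ≤ B.card

/-- A `λ'`-fragment: a vertex set whose edge-boundary is a minimum restricted edge-cut. -/
def IsRFragment (G : Multigraph V) (A : Finset V) : Prop :=
  G.IsRestrictedEdgeCut (G.boundary A) ∧ G.cut A = G.rEdgeConn

/-- A `λ'`-atom: a `λ'`-fragment of minimum cardinality. -/
def IsRAtom (G : Multigraph V) (A : Finset V) : Prop :=
  G.IsRFragment A ∧ ∀ B : Finset V, G.IsRFragment B → A.card ≤ B.card

/-- `G` is super edge-connected if every minimum edge-cut is the set of all edges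
incident with some vertex. -/
def IsSuperEdgeConnected (G : Multigraph V) : Prop :=
  ∀ F : G.EdgeSub, G.IsEdgeCut F → F.card = G.edgeConn →
    ∃ v : V, ∀ u w : V, F.f u w = if u = v ∨ w = v then G.mult u w else 0

end Fin

end Multigraph

variable {V : Type*} [Fintype V] [DecidableEq V]

open Multigraph


/-- Restrict an automorphism stabilizing `A` to the induced sub-multigraph. -/
def autRestrict (G : Multigraph V) (A : Finset V) (e : G.Aut) (h : A.image e.1 = A) :
    (G.induce A).Aut :=
  ⟨{ toFun := fun x => ⟨e.1 x.1, by
        have := Finset.mem_image_of_mem e.1 x.2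
        rwa [h] at this⟩,
     invFun := fun x => ⟨e.1.symm x.1, by
        have hx : x.1 ∈ A.image e.1 := by rw [h]; exact x.2
        obtain ⟨y, hy, hyx⟩ := Finset.mem_image.mp hx
        have hyy : y = e.1.symm x.1 := by rw [← hyx]; simp
        rwa [hyy] at hy⟩,
     left_inv := fun x => by simp,
     right_inv := fun x => by simp },
   fun u v => e.2 u.1 v.1⟩

/-- If `G` is a connected half-transitive bipartite multigraph and `A` is an imprimitive block
meeting both parts, then the induced sub-multigraph `G[A]` is half-transitive. -/
theorem induce_isHalfTransitive (G : Multigraph V) (V₁ V₂ : Finset V)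
    (hG : G.Connected) (A : Finset V) (hblock : G.IsImprimitiveBlock A)
    (h1 : (A ∩ V₁).Nonempty) (h2 : (A ∩ V₂).Nonempty)
    (hht : G.IsHalfTransitive V₁ V₂) :
    (G.induce A).IsHalfTransitive
      (Finset.univ.filter fun x : {x // x ∈ A} => x.1 ∈ V₁)
      (Finset.univ.filter fun x : {x // x ∈ A} => x.1 ∈ V₂) := by
  obtain ⟨⟨hdisj, huniv, hadj⟩, ht1, ht2⟩ := hht
  obtain ⟨hne, hA, hstab⟩ := hblock
  -- Key: any automorphism sending a point of A into A stabilizes A.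
  have key : ∀ e : G.Aut, ∀ a ∈ A, e.1 a ∈ A → A.image e.1 = A := by
    intro e a ha hea
    rcases hstab e with h | h
    · exact h
    · exact absurd hea (Finset.disjoint_left.mp h (Finset.mem_image_of_mem _ ha))
  refine ⟨⟨?_, ?_, ?_⟩, ?_, ?_⟩
  · rw [Finset.disjoint_left]
    intro x hx hx'
    simp only [Finset.mem_filter] at hx hx'
    exact (Finset.disjoint_left.mp hdisj) hx.2 hx'.2
  · ext x
    simp only [Finset.mem_union, Finset.mem_filter, Finset.mem_univ, true_and, iff_true]
    have : x.1 ∈ V₁ ∪ V₂ := by rw [huniv]; exact Finset.mem_univ _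
    simpa using this
  · intro u v huv
    simp only [Finset.mem_filter, Finset.mem_univ, true_and]
    exact hadj u.1 v.1 huv
  · intro u hu v hv
    simp only [Finset.mem_filter] at hu hv
    obtain ⟨e, he⟩ := ht1 u.1 hu.2 v.1 hv.2
    have him : A.image e.1 = A := key e u.1 u.2 (by rw [he]; exact v.2)
    exact ⟨autRestrict G A e him, Subtype.ext he⟩
  · intro u hu v hv
    simp only [Finset.mem_filter] at hu hv
    obtain ⟨e, he⟩ := ht2 u.1 hu.2 v.1 hv.2
    have him : A.image e.1 = A := key e u.1 u.2 (by rw [he]; exact v.2)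
    exact ⟨autRestrict G A e him, Subtype.ext he⟩
end

section
/- Let G be a connected half-transitive multigraph with bipartition V₁ ∪ V₂, where every vertex of V₁ has degree d₁ and every vertex of V₂ has degree d₂. Then G is not maximally edge-connected (λ(G) < min{d₁,d₂}) if and only if there exists a proper induced connected half-transitive sub-multigraph H of G with |A₁|(d₁−d₁') + |A₂|(d₂−d₂') ≤ min{d₁,d₂} − 1, where A₁ = V₁ ∩ V(H), A₂ = V₂ ∩ V(H), and d₁', d₂' are the common degrees in H of vertices of A₁, A₂ respectively. -/
namespace Multigraph

variable {V : Type*} [Fintype V] [DecidableEq V] (G : Multigraph V)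

open Finset

lemma sum_mult_comm (A B : Finset V) :
    ∑ u ∈ A, ∑ v ∈ B, G.mult u v = ∑ u ∈ B, ∑ v ∈ A, G.mult u v := by
  rw [Finset.sum_comm]
  exact Finset.sum_congr rfl fun u _ => Finset.sum_congr rfl fun v _ => G.symm v u

lemma cut_compl (A : Finset V) : G.cut Aᶜ = G.cut A := by
  unfold cut
  rw [compl_compl, sum_mult_comm]

/-- `degIn G A u` : degree of `u` into `A`. -/
def degIn (A : Finset V) (u : V) : ℕ := ∑ v ∈ A, G.mult u v

lemma degIn_le_degree (A : Finset V) (u : V) : G.degIn A u ≤ G.degree u :=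
  Finset.sum_le_sum_of_subset (Finset.subset_univ A)

lemma induce_degree (A : Finset V) (x : {y // y ∈ A}) :
    (G.induce A).degree x = G.degIn A x.1 := by
  unfold degree induce degIn
  rw [← Finset.sum_attach A (fun v => G.mult x.1 v)]
  rfl

lemma cut_eq_sum_degIn (A : Finset V) :
    G.cut A = ∑ u ∈ A, (G.degree u - G.degIn A u) := by
  unfold cut
  refine Finset.sum_congr rfl fun u _ => ?_
  have : G.degree u = G.degIn A u + ∑ v ∈ Aᶜ, G.mult u v := by
    unfold degree degIn
    rw [← Finset.sum_add_sum_compl A]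
  omega

lemma mult_le_degree (u v : V) : G.mult u v ≤ G.degree u :=
  Finset.single_le_sum (f := fun w => G.mult u w) (fun _ _ => Nat.zero_le _) (Finset.mem_univ v)

end Multigraph
set_option linter.unusedSectionVars false
namespace Multigraph

variable {V : Type*} [Fintype V] [DecidableEq V] (G : Multigraph V)

open Finset

lemma boundary_card (A : Finset V) : (G.boundary A).card = G.cut A := by
  unfold EdgeSub.card
  have key : ∑ u, ∑ v, (G.boundary A).f u v = G.cut A + G.cut A := by
    have : ∀ u v : V, (G.boundary A).f u v =
        (if u ∈ A ∧ v ∉ A then G.mult u v else 0) +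
        (if v ∈ A ∧ u ∉ A then G.mult u v else 0) := by
      intro u v
      show (if (u ∈ A ∧ v ∉ A) ∨ (v ∈ A ∧ u ∉ A) then G.mult u v else 0) = _
      by_cases h1 : u ∈ A <;> by_cases h2 : v ∈ A <;> simp [h1, h2]
    simp_rw [this, Finset.sum_add_distrib]
    congr 1
    · unfold cut
      rw [← Finset.sum_subset (Finset.subset_univ A)]
      · refine Finset.sum_congr rfl fun u hu => ?_
        rw [← Finset.sum_subset (Finset.subset_univ Aᶜ)]
        · refine Finset.sum_congr rfl fun v hv => ?_
          rw [if_pos ⟨hu, Finset.mem_compl.mp hv⟩]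
        · intro v _ hv
          simp only [Finset.mem_compl, not_not] at hv
          simp [hv, hu]
      · intro u _ hu
        apply Finset.sum_eq_zero
        intro v _
        simp [hu]
    · unfold cut
      rw [Finset.sum_comm]
      rw [← Finset.sum_subset (Finset.subset_univ A)]
      · refine Finset.sum_congr rfl fun v hv => ?_
        rw [← Finset.sum_subset (Finset.subset_univ Aᶜ)]
        · refine Finset.sum_congr rfl fun u hu => ?_
          rw [Finset.mem_compl] at hu
          rw [if_pos ⟨hv, hu⟩, G.symm]
        · intro u _ hu
          simp only [Finset.mem_compl, not_not] at hu
          simp [hu, hv]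
      · intro v _ hv
        apply Finset.sum_eq_zero
        intro u _
        simp [hv]
  omega

lemma reach_delete_boundary (A : Finset V) {a b : V}
    (h : (G.deleteEdges (G.boundary A)).Reachable a b) (ha : a ∈ A) : b ∈ A := by
  induction h with
  | refl => exact ha
  | tail _ hadj ih =>
    rename_i c d _
    by_contra hd
    have : (G.deleteEdges (G.boundary A)).mult c d = 0 := by
      show G.mult c d - (G.boundary A).f c d = 0
      have : (G.boundary A).f c d = G.mult c d := by
        show (if (c ∈ A ∧ d ∉ A) ∨ (d ∈ A ∧ c ∉ A) then G.mult c d else 0) = G.mult c d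
        rw [if_pos (Or.inl ⟨ih, hd⟩)]
      omega
    exact absurd hadj (by simp [Adj, this])

lemma boundary_isEdgeCut (A : Finset V) (hA : A.Nonempty) (hAc : Aᶜ.Nonempty) :
    G.IsEdgeCut (G.boundary A) := by
  obtain ⟨a, ha⟩ := hA
  obtain ⟨b, hb⟩ := hAc
  rintro ⟨-, hreach⟩
  exact (Finset.mem_compl.mp hb) (G.reach_delete_boundary A (hreach a b) ha)

lemma edgeConn_le_cut (A : Finset V) (hA : A.Nonempty) (hAc : Aᶜ.Nonempty) :
    G.edgeConn ≤ G.cut A :=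
  Nat.sInf_le ⟨G.boundary A, G.boundary_isEdgeCut A hA hAc, G.boundary_card A⟩

end Multigraph
set_option linter.unusedSectionVars false in
lemma Multigraph.cut_eq_sum_univ {V : Type*} [Fintype V] [DecidableEq V] (G : Multigraph V)
    (A : Finset V) :
    G.cut A = ∑ u, ∑ v, if u ∈ A ∧ v ∉ A then G.mult u v else 0 := by
  have hAc : Aᶜ = Finset.univ.filter (fun v => v ∉ A) := by ext v; simp
  have inner : ∀ u : V, (∑ v, if u ∈ A ∧ v ∉ A then G.mult u v else 0)
      = if u ∈ A then ∑ v ∈ Aᶜ, G.mult u v else 0 := by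
    intro u
    by_cases h : u ∈ A
    · rw [if_pos h, hAc, Finset.sum_filter]
      simp [h]
    · simp [h]
  simp_rw [inner]
  have hA' : A = Finset.univ.filter (fun u => u ∈ A) := by ext u; simp
  rw [cut, ← Finset.sum_filter, ← hA']

namespace Multigraph

variable {V : Type*} [Fintype V] [DecidableEq V] (G : Multigraph V)
set_option linter.unusedSectionVars false

lemma cut_submodular (A B : Finset V) :
    G.cut (A ∩ B) + G.cut (A ∪ B) ≤ G.cut A + G.cut B := by
  simp_rw [cut_eq_sum_univ, ← Finset.sum_add_distrib]
  refine Finset.sum_le_sum fun u _ => Finset.sum_le_sum fun v _ => ?_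
  by_cases h1 : u ∈ A <;> by_cases h2 : u ∈ B <;> by_cases h3 : v ∈ A <;> by_cases h4 : v ∈ B <;>
    simp [h1, h2, h3, h4, Finset.mem_inter, Finset.mem_union]

end Multigraph
namespace Multigraph

variable {V : Type*} [Fintype V] [DecidableEq V] (G : Multigraph V)
set_option linter.unusedSectionVars false

lemma isFragment_compl {A : Finset V} (h : G.IsFragment A) : G.IsFragment Aᶜ := by
  obtain ⟨h1, h2, h3, h4⟩ := h
  refine ⟨h2, by rwa [compl_compl], ?_, by rwa [cut_compl]⟩
  exact G.boundary_isEdgeCut Aᶜ h2 (by rwa [compl_compl])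

lemma cut_le_card_of_edgeCut {F : G.EdgeSub} (hF : G.IsEdgeCut F) (hNe : Nonempty V) :
    ∃ A : Finset V, A.Nonempty ∧ Aᶜ.Nonempty ∧ G.cut A ≤ F.card := by
  classical
  unfold IsEdgeCut Connected at hF
  push_neg at hF
  obtain ⟨a, b, hab⟩ := hF hNe
  set H := G.deleteEdges F with hH
  refine ⟨Finset.univ.filter (fun w => H.Reachable a w), ⟨a, by simp only [Finset.mem_filter, Finset.mem_univ, true_and]; exact Relation.ReflTransGen.refl⟩,
    ⟨b, by simp [hab]⟩, ?_⟩
  set A := Finset.univ.filter (fun w => H.Reachable a w) with hA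
  have hcross : ∀ u ∈ A, ∀ v ∈ Aᶜ, F.f u v = G.mult u v := by
    intro u hu v hv
    by_contra hne
    have hlt : F.f u v < G.mult u v := lt_of_le_of_ne (F.le u v) hne
    have hadj : H.Adj u v := by
      show 0 < G.mult u v - F.f u v
      omega
    have : H.Reachable a v :=
      Relation.ReflTransGen.tail (show H.Reachable a u by simpa [hA] using hu) hadj
    simp [hA, this] at hv
  have h2 : G.cut A + G.cut A ≤ ∑ u, ∑ v, F.f u v := by
    have hsplit : ∑ u, ∑ v, F.f u v
        = (∑ u ∈ A, ∑ v, F.f u v) + ∑ u ∈ Aᶜ, ∑ v, F.f u v :=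
      (Finset.sum_add_sum_compl A _).symm
    have t1 : G.cut A ≤ ∑ u ∈ A, ∑ v, F.f u v := by
      refine le_trans (le_of_eq ?_) (Finset.sum_le_sum fun u hu =>
        Finset.sum_le_sum_of_subset (Finset.subset_univ Aᶜ))
      exact Finset.sum_congr rfl fun u hu =>
        Finset.sum_congr rfl fun v hv => (hcross u hu v hv).symm
    have t2 : G.cut A ≤ ∑ u ∈ Aᶜ, ∑ v, F.f u v := by
      have : G.cut A = ∑ u ∈ Aᶜ, ∑ v ∈ A, F.f u v := by
        rw [cut]
        rw [show (∑ u ∈ A, ∑ v ∈ Aᶜ, G.mult u v) = ∑ u ∈ Aᶜ, ∑ v ∈ A, G.mult u v from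
          G.sum_mult_comm A Aᶜ]
        refine Finset.sum_congr rfl fun u hu => Finset.sum_congr rfl fun v hv => ?_
        rw [F.symm, hcross v hv u hu, G.symm]
      rw [this]
      exact Finset.sum_le_sum fun u _ => Finset.sum_le_sum_of_subset (Finset.subset_univ A)
    omega
  rw [EdgeSub.card]
  omega

lemma exists_isAtom (h2 : ∃ u v : V, u ≠ v) : ∃ A, G.IsAtom A := by
  obtain ⟨u, v, huv⟩ := h2
  have hne : {n | ∃ F : G.EdgeSub, G.IsEdgeCut F ∧ F.card = n}.Nonempty := by
    refine ⟨_, G.boundary {v}, G.boundary_isEdgeCut _ ⟨v, Finset.mem_singleton_self v⟩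
      ⟨u, by simp [huv]⟩, rfl⟩
  obtain ⟨F, hF, hFcard⟩ := Nat.sInf_mem hne
  obtain ⟨A, hA1, hA2, hA3⟩ := G.cut_le_card_of_edgeCut hF ⟨u⟩
  have hfrag : G.IsFragment A := by
    refine ⟨hA1, hA2, G.boundary_isEdgeCut A hA1 hA2, le_antisymm ?_ ?_⟩
    · exact hA3.trans (le_of_eq hFcard)
    · exact G.edgeConn_le_cut A hA1 hA2
  have hne2 : {k | ∃ B : Finset V, G.IsFragment B ∧ B.card = k}.Nonempty := ⟨A.card, A, hfrag, rfl⟩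
  obtain ⟨B, hB, hBcard⟩ := Nat.sInf_mem hne2
  exact ⟨B, hB, fun C hC => hBcard ▸ Nat.sInf_le ⟨C, hC, rfl⟩⟩

lemma mem_image_perm {e : Equiv.Perm V} {A : Finset V} {v : V} :
    v ∈ A.image e ↔ e.symm v ∈ A := by
  constructor
  · rintro h
    obtain ⟨a, ha, rfl⟩ := Finset.mem_image.mp h
    simpa using ha
  · intro h
    exact Finset.mem_image.mpr ⟨e.symm v, h, e.apply_symm_apply v⟩

lemma image_perm_compl (e : Equiv.Perm V) (A : Finset V) :
    (A.image e)ᶜ = Aᶜ.image e := by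
  ext v
  rw [Finset.mem_compl, mem_image_perm, mem_image_perm, Finset.mem_compl]

lemma cut_image (e : G.Aut) (A : Finset V) : G.cut (A.image e.1) = G.cut A := by
  rw [cut, cut, image_perm_compl,
    Finset.sum_image (fun a _ b _ h => e.1.injective h)]
  refine Finset.sum_congr rfl fun u _ => ?_
  rw [Finset.sum_image (fun a _ b _ h => e.1.injective h)]
  exact Finset.sum_congr rfl fun v _ => e.2 u v

lemma isFragment_image (e : G.Aut) {A : Finset V} (h : G.IsFragment A) :
    G.IsFragment (A.image e.1) := by
  obtain ⟨h1, h2, h3, h4⟩ := h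
  have hne : (A.image e.1).Nonempty := h1.image e.1
  have hne2 : (A.image e.1)ᶜ.Nonempty := by rw [image_perm_compl]; exact h2.image e.1
  exact ⟨hne, hne2, G.boundary_isEdgeCut _ hne hne2, by rw [cut_image]; exact h4⟩

lemma atom_eq_of_inter {A B : Finset V} (hA : G.IsAtom A) (hB : G.IsFragment B)
    (hcard : B.card = A.card) (hAB : (A ∩ B).Nonempty) : A = B := by
  have hAc : A.card ≤ Aᶜ.card := hA.2 Aᶜ (G.isFragment_compl hA.1)
  have hBc : A.card ≤ Bᶜ.card := hA.2 Bᶜ (G.isFragment_compl hB)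
  have hcardV : Aᶜ.card = Fintype.card V - A.card := by rw [Finset.card_compl]
  have hcardVB : Bᶜ.card = Fintype.card V - B.card := by rw [Finset.card_compl]
  have hABle : A.card ≤ Fintype.card V := Finset.card_le_univ A
  have hBle : B.card ≤ Fintype.card V := Finset.card_le_univ B
  have hsum : (A ∪ B).card + (A ∩ B).card = A.card + B.card :=
    Finset.card_union_add_card_inter A B
  have hABpos : 1 ≤ (A ∩ B).card := Finset.card_pos.mpr hAB
  have hUniv : (A ∪ B).card < Fintype.card V := by omega
  have hUc : (A ∪ B)ᶜ.Nonempty := by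
    rw [← Finset.card_pos, Finset.card_compl]
    omega
  have hUne : (A ∪ B).Nonempty := hAB.mono (Finset.inter_subset_left.trans Finset.subset_union_left)
  have hIc : (A ∩ B)ᶜ.Nonempty := hA.1.2.1.mono (Finset.compl_subset_compl.mpr
    Finset.inter_subset_left)
  have l1 : G.edgeConn ≤ G.cut (A ∩ B) := G.edgeConn_le_cut _ hAB hIc
  have l2 : G.edgeConn ≤ G.cut (A ∪ B) := G.edgeConn_le_cut _ hUne hUc
  have l3 : G.cut (A ∩ B) + G.cut (A ∪ B) ≤ G.cut A + G.cut B := G.cut_submodular A B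
  have hcutA : G.cut A = G.edgeConn := hA.1.2.2.2
  have hcutB : G.cut B = G.edgeConn := hB.2.2.2
  have hIcut : G.cut (A ∩ B) = G.edgeConn := by omega
  have hfragI : G.IsFragment (A ∩ B) :=
    ⟨hAB, hIc, G.boundary_isEdgeCut _ hAB hIc, hIcut⟩
  have h5 : A.card ≤ (A ∩ B).card := hA.2 _ hfragI
  have e1 : A ∩ B = A := Finset.eq_of_subset_of_card_le Finset.inter_subset_left h5
  have e2 : A ∩ B = B := Finset.eq_of_subset_of_card_le Finset.inter_subset_right (hcard ▸ h5)
  rw [← e1, e2]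

end Multigraph
namespace Multigraph

variable {V : Type*} [Fintype V] [DecidableEq V] (G : Multigraph V)
set_option linter.unusedSectionVars false

lemma atom_induce_connected {A : Finset V} (hA : G.IsAtom A) : (G.induce A).Connected := by
  classical
  obtain ⟨⟨hne, hnec, hcut, heq⟩, hmin⟩ := hA
  refine ⟨⟨⟨hne.choose, hne.choose_spec⟩⟩, ?_⟩
  by_contra h
  push_neg at h
  obtain ⟨x, y, hxy⟩ := h
  set B : Finset V := Finset.univ.filter
    (fun b => ∃ hb : b ∈ A, (G.induce A).Reachable x ⟨b, hb⟩) with hB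
  have hBsub : B ⊆ A := fun b hb => ((Finset.mem_filter.mp hb).2).choose
  have hxB : x.1 ∈ B := by
    simp only [hB, Finset.mem_filter, Finset.mem_univ, true_and]
    exact ⟨x.2, Relation.ReflTransGen.refl⟩
  have hyB : y.1 ∉ B := by
    simp only [hB, Finset.mem_filter, Finset.mem_univ, true_and]
    rintro ⟨hb, hr⟩
    exact hxy hr
  have hcross : ∀ u ∈ B, ∀ v ∈ A, v ∉ B → G.mult u v = 0 := by
    intro u hu v hv hvB
    by_contra hmult
    obtain ⟨hu', hr⟩ := (Finset.mem_filter.mp hu).2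
    have hadj : (G.induce A).Adj ⟨u, hu'⟩ ⟨v, hv⟩ := Nat.pos_of_ne_zero hmult
    exact hvB (by
      simp only [hB, Finset.mem_filter, Finset.mem_univ, true_and]
      exact ⟨hv, Relation.ReflTransGen.tail hr hadj⟩)
  have hcutB : G.cut B ≤ G.cut A := by
    have hcompl : Bᶜ = (A \ B) ∪ Aᶜ := by
      ext v
      simp only [Finset.mem_compl, Finset.mem_union, Finset.mem_sdiff]
      by_cases hv : v ∈ A
      · constructor
        · intro h; exact Or.inl ⟨hv, h⟩
        · rintro (⟨-, h⟩ | h) ; exact h; exact absurd hv h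
      · constructor
        · intro h; exact Or.inr hv
        · intro _ hvb; exact hv (hBsub hvb)
    have hdisj : Disjoint (A \ B) Aᶜ :=
      disjoint_compl_right.mono_left Finset.sdiff_subset
    calc G.cut B = ∑ u ∈ B, ((∑ v ∈ A \ B, G.mult u v) + ∑ v ∈ Aᶜ, G.mult u v) := by
          rw [cut]
          exact Finset.sum_congr rfl fun u _ => by rw [hcompl, Finset.sum_union hdisj]
      _ = ∑ u ∈ B, ∑ v ∈ Aᶜ, G.mult u v := by
          refine Finset.sum_congr rfl fun u hu => ?_
          have : ∑ v ∈ A \ B, G.mult u v = 0 := Finset.sum_eq_zero fun v hv =>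
            hcross u hu v (Finset.mem_sdiff.mp hv).1 (Finset.mem_sdiff.mp hv).2
          omega
      _ ≤ ∑ u ∈ A, ∑ v ∈ Aᶜ, G.mult u v := Finset.sum_le_sum_of_subset hBsub
      _ = G.cut A := rfl
  have hBne : B.Nonempty := ⟨x.1, hxB⟩
  have hBcne : Bᶜ.Nonempty := ⟨y.1, Finset.mem_compl.mpr hyB⟩
  have hfrag : G.IsFragment B := by
    refine ⟨hBne, hBcne, G.boundary_isEdgeCut B hBne hBcne, le_antisymm ?_ ?_⟩
    · rw [← heq] at *; exact hcutB
    · exact G.edgeConn_le_cut B hBne hBcne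
  have hlt : B.card < A.card :=
    Finset.card_lt_card (Finset.ssubset_iff_of_subset hBsub |>.mpr ⟨y.1, y.2, hyB⟩)
  exact absurd (hmin B hfrag) (by omega)

def restrictAut (e : G.Aut) (A : Finset V) (h : A.image e.1 = A) :
    (G.induce A).Aut :=
  have hfwd : ∀ v : V, v ∈ A → e.1 v ∈ A := fun v hv => by
    have hx := Finset.mem_image_of_mem e.1 hv; rwa [h] at hx
  have hsymm : ∀ v : V, v ∈ A → e.1.symm v ∈ A := fun v hv =>
    mem_image_perm.mp (by rw [h]; exact hv)
  ⟨{ toFun := fun x => ⟨e.1 x.1, hfwd x.1 x.2⟩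
     invFun := fun x => ⟨e.1.symm x.1, hsymm x.1 x.2⟩
     left_inv := fun x => Subtype.ext (e.1.symm_apply_apply x.1)
     right_inv := fun x => Subtype.ext (e.1.apply_symm_apply x.1) },
   fun u v => e.2 u.1 v.1⟩

lemma degree_aut {W : Type*} [Fintype W] [DecidableEq W] (H : Multigraph W) (σ : H.Aut) (x : W) :
    H.degree (σ.1 x) = H.degree x := by
  unfold degree
  rw [← Equiv.sum_comp σ.1 (fun u => H.mult (σ.1 x) u)]
  exact Finset.sum_congr rfl fun u _ => σ.2 x u

lemma atom_image_eq {A : Finset V} (hA : G.IsAtom A) (e : G.Aut) {u : V}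
    (hu : u ∈ A) (hv : e.1 u ∈ A) : A.image e.1 = A :=
  (G.atom_eq_of_inter hA (G.isFragment_image e hA.1)
    (Finset.card_image_of_injective A e.1.injective)
    ⟨e.1 u, Finset.mem_inter.mpr ⟨hv, Finset.mem_image_of_mem _ hu⟩⟩).symm

lemma cut_formula (A V₁ V₂ : Finset V) (hdisj : Disjoint V₁ V₂)
    (huniv : V₁ ∪ V₂ = Finset.univ) {d₁ d₂ d₁' d₂' : ℕ}
    (hd1 : ∀ v ∈ V₁, G.degree v = d₁) (hd2 : ∀ v ∈ V₂, G.degree v = d₂)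
    (h1 : ∀ u ∈ V₁ ∩ A, G.degIn A u = d₁') (h2 : ∀ u ∈ V₂ ∩ A, G.degIn A u = d₂') :
    G.cut A = (V₁ ∩ A).card * (d₁ - d₁') + (V₂ ∩ A).card * (d₂ - d₂') := by
  rw [cut_eq_sum_degIn]
  have hsplit : A = (V₁ ∩ A) ∪ (V₂ ∩ A) := by
    ext v
    simp only [Finset.mem_union, Finset.mem_inter]
    constructor
    · intro hv
      have hv2 : v ∈ V₁ ∪ V₂ := huniv ▸ Finset.mem_univ v
      rcases Finset.mem_union.mp hv2 with h | h
      exacts [Or.inl ⟨h, hv⟩, Or.inr ⟨h, hv⟩]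
    · rintro (⟨-, h⟩ | ⟨-, h⟩) <;> exact h
  have hd : Disjoint (V₁ ∩ A) (V₂ ∩ A) :=
    hdisj.mono Finset.inter_subset_left Finset.inter_subset_left
  rw [show (∑ u ∈ A, (G.degree u - G.degIn A u))
      = ∑ u ∈ (V₁ ∩ A) ∪ (V₂ ∩ A), (G.degree u - G.degIn A u) from by rw [← hsplit],
    Finset.sum_union hd]
  congr 1
  · rw [Finset.sum_congr rfl (fun u hu => by
      rw [hd1 u (Finset.mem_inter.mp hu).1, h1 u hu]), Finset.sum_const, smul_eq_mul]
  · rw [Finset.sum_congr rfl (fun u hu => by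
      rw [hd2 u (Finset.mem_inter.mp hu).1, h2 u hu]), Finset.sum_const, smul_eq_mul]

lemma compl_nonempty_iff_ne_univ {A : Finset V} : Aᶜ.Nonempty ↔ A ≠ Finset.univ := by
  constructor
  · rintro ⟨w, hw⟩ rfl
    simp at hw
  · intro h
    rw [← Finset.card_pos, Finset.card_compl]
    have h1 : A.card ≤ Fintype.card V := Finset.card_le_univ A
    have h2 : A.card ≠ Fintype.card V := fun hc =>
      h (Finset.eq_of_subset_of_card_le (Finset.subset_univ A)
        (by rw [hc, Finset.card_univ]))
    omega

end Multigraph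

variable {V : Type*} [Fintype V] [DecidableEq V]

open Multigraph


/-- A connected half-transitive multigraph is not maximally edge-connected iff it contains a
proper induced connected half-transitive sub-multigraph `H` with
`|A₁|(d₁-d₁') + |A₂|(d₂-d₂') ≤ min d₁ d₂ - 1`. -/
theorem not_maximallyEdgeConnected_iff (G : Multigraph V) (V₁ V₂ : Finset V) (d₁ d₂ : ℕ)
    (hG : G.Connected) (hht : G.IsHalfTransitive V₁ V₂)
    (hd1 : ∀ v ∈ V₁, G.degree v = d₁) (hd2 : ∀ v ∈ V₂, G.degree v = d₂) :
    G.edgeConn < min d₁ d₂ ↔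
    ∃ (S : Finset V) (d₁' d₂' : ℕ),
      S.Nonempty ∧ S ≠ Finset.univ ∧ (G.induce S).Connected ∧
      (G.induce S).IsHalfTransitive
        (Finset.univ.filter fun x : {x // x ∈ S} => x.1 ∈ V₁)
        (Finset.univ.filter fun x : {x // x ∈ S} => x.1 ∈ V₂) ∧
      (∀ x : {x // x ∈ S}, x.1 ∈ V₁ → (G.induce S).degree x = d₁') ∧
      (∀ x : {x // x ∈ S}, x.1 ∈ V₂ → (G.induce S).degree x = d₂') ∧
      (V₁ ∩ S).card * (d₁ - d₁') + (V₂ ∩ S).card * (d₂ - d₂') ≤ min d₁ d₂ - 1 := by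
  classical
  obtain ⟨⟨hdisj, huniv, hadjbp⟩, htr1, htr2⟩ := hht
  constructor
  · intro hlt
    have h2 : ∃ u v : V, u ≠ v := by
      by_contra hcon
      push_neg at hcon
      obtain ⟨v⟩ := hG.1
      have hdeg : G.degree v = 0 :=
        Finset.sum_eq_zero fun u _ => by rw [← hcon v u]; exact G.loopless v
      rcases Finset.mem_union.mp (huniv ▸ Finset.mem_univ v) with h | h
      · have : d₁ = 0 := by rw [← hd1 v h]; exact hdeg
        omega
      · have : d₂ = 0 := by rw [← hd2 v h]; exact hdeg
        omega
    obtain ⟨A, hA⟩ := G.exists_isAtom h2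
    have hperm : ∀ (u v : V) (hu : u ∈ A) (hv : v ∈ A), (∃ e : G.Aut, e.1 u = v) →
        ∃ σ : (G.induce A).Aut, σ.1 ⟨u, hu⟩ = ⟨v, hv⟩ := by
      rintro u v hu hv ⟨e, he⟩
      have him : A.image e.1 = A := G.atom_image_eq hA e hu (by rw [he]; exact hv)
      exact ⟨G.restrictAut e A him, Subtype.ext he⟩
    have hdegconst : ∀ (u v : V) (hu : u ∈ A) (hv : v ∈ A), (∃ e : G.Aut, e.1 u = v) →
        G.degIn A u = G.degIn A v := by
      rintro u v hu hv hex
      obtain ⟨σ, hσ⟩ := hperm u v hu hv hex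
      have hda := Multigraph.degree_aut (G.induce A) σ ⟨u, hu⟩
      rw [hσ] at hda
      rw [← G.induce_degree A ⟨u, hu⟩, ← G.induce_degree A ⟨v, hv⟩]
      exact hda.symm
    have hd1' : ∃ d₁', ∀ u ∈ V₁ ∩ A, G.degIn A u = d₁' := by
      rcases (V₁ ∩ A).eq_empty_or_nonempty with hc | ⟨w, hw⟩
      · exact ⟨0, fun u hu => by rw [hc] at hu; exact absurd hu (Finset.notMem_empty u)⟩
      · obtain ⟨hw1, hw2⟩ := Finset.mem_inter.mp hw
        refine ⟨G.degIn A w, fun u hu => ?_⟩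
        obtain ⟨hu1, hu2⟩ := Finset.mem_inter.mp hu
        exact hdegconst u w hu2 hw2 (htr1 u hu1 w hw1)
    have hd2' : ∃ d₂', ∀ u ∈ V₂ ∩ A, G.degIn A u = d₂' := by
      rcases (V₂ ∩ A).eq_empty_or_nonempty with hc | ⟨w, hw⟩
      · exact ⟨0, fun u hu => by rw [hc] at hu; exact absurd hu (Finset.notMem_empty u)⟩
      · obtain ⟨hw1, hw2⟩ := Finset.mem_inter.mp hw
        refine ⟨G.degIn A w, fun u hu => ?_⟩
        obtain ⟨hu1, hu2⟩ := Finset.mem_inter.mp hu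
        exact hdegconst u w hu2 hw2 (htr2 u hu1 w hw1)
    obtain ⟨d₁', hd1'⟩ := hd1'
    obtain ⟨d₂', hd2'⟩ := hd2'
    have hformula : G.cut A = (V₁ ∩ A).card * (d₁ - d₁') + (V₂ ∩ A).card * (d₂ - d₂') :=
      G.cut_formula A V₁ V₂ hdisj huniv hd1 hd2 hd1' hd2'
    refine ⟨A, d₁', d₂', hA.1.1, compl_nonempty_iff_ne_univ.mp hA.1.2.1,
      G.atom_induce_connected hA, ⟨⟨?_, ?_, ?_⟩, ?_, ?_⟩, ?_, ?_, ?_⟩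
    · refine Finset.disjoint_left.mpr fun x hx1 hx2 => ?_
      rw [Finset.mem_filter] at hx1 hx2
      exact Finset.disjoint_left.mp hdisj hx1.2 hx2.2
    · ext x
      simp only [Finset.mem_union, Finset.mem_filter, Finset.mem_univ, true_and]
      exact ⟨fun _ => trivial, fun _ => Finset.mem_union.mp (huniv ▸ Finset.mem_univ x.1)⟩
    · intro x y hadj
      have := hadjbp x.1 y.1 hadj
      simp only [Finset.mem_filter, Finset.mem_univ, true_and]
      exact this
    · intro x hx y hy
      rw [Finset.mem_filter] at hx hy
      obtain ⟨σ, hσ⟩ := hperm x.1 y.1 x.2 y.2 (htr1 x.1 hx.2 y.1 hy.2)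
      exact ⟨σ, hσ⟩
    · intro x hx y hy
      rw [Finset.mem_filter] at hx hy
      obtain ⟨σ, hσ⟩ := hperm x.1 y.1 x.2 y.2 (htr2 x.1 hx.2 y.1 hy.2)
      exact ⟨σ, hσ⟩
    · intro x hx
      rw [G.induce_degree A x]
      exact hd1' x.1 (Finset.mem_inter.mpr ⟨hx, x.2⟩)
    · intro x hx
      rw [G.induce_degree A x]
      exact hd2' x.1 (Finset.mem_inter.mpr ⟨hx, x.2⟩)
    · have hcutA : G.cut A = G.edgeConn := hA.1.2.2.2
      omega
  · rintro ⟨S, d₁', d₂', hSne, hSuniv, -, -, hdeg1, hdeg2, hineq⟩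
    have hScne : Sᶜ.Nonempty := compl_nonempty_iff_ne_univ.mpr hSuniv
    obtain ⟨s, hs⟩ := hSne
    obtain ⟨t, ht⟩ := hScne
    have hst : s ≠ t := fun h => (Finset.mem_compl.mp ht) (h ▸ hs)
    have hdegpos : ∀ w : V, 0 < G.degree w := by
      intro w
      obtain ⟨z, hz⟩ : ∃ z, z ≠ w := by
        by_cases h : s = w
        · exact ⟨t, fun ht' => hst (h.trans ht'.symm ▸ rfl)⟩
        · exact ⟨s, h⟩
      rcases Relation.ReflTransGen.cases_head (hG.2 w z) with h | ⟨b, hadj, -⟩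
      · exact absurd h.symm hz
      · exact lt_of_lt_of_le hadj (G.mult_le_degree w b)
    have hneighbor : ∀ w : V, ∃ u, G.Adj w u := by
      intro w
      by_contra hcon
      push_neg at hcon
      have h0 : G.degree w = 0 := Finset.sum_eq_zero fun u _ =>
        Nat.eq_zero_of_not_pos (hcon u)
      have := hdegpos w
      omega
    have hV1 : V₁.Nonempty := by
      obtain ⟨v⟩ := hG.1
      rcases Finset.mem_union.mp (huniv ▸ Finset.mem_univ v) with h | h
      · exact ⟨v, h⟩
      · obtain ⟨u, hu⟩ := hneighbor v
        have hiff := hadjbp v u hu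
        have hvn1 : v ∉ V₁ := fun hv1 => Finset.disjoint_left.mp hdisj hv1 h
        have hun2 : u ∉ V₂ := fun hu2 => hvn1 (hiff.mpr hu2)
        rcases Finset.mem_union.mp (huniv ▸ Finset.mem_univ u) with h' | h'
        · exact ⟨u, h'⟩
        · exact absurd h' hun2
    have hV2 : V₂.Nonempty := by
      obtain ⟨v⟩ := hG.1
      rcases Finset.mem_union.mp (huniv ▸ Finset.mem_univ v) with h | h
      · obtain ⟨u, hu⟩ := hneighbor v
        exact ⟨u, (hadjbp v u hu).mp h⟩
      · exact ⟨v, h⟩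
    have hd1pos : 1 ≤ d₁ := by
      obtain ⟨v, hv⟩ := hV1
      rw [← hd1 v hv]
      exact hdegpos v
    have hd2pos : 1 ≤ d₂ := by
      obtain ⟨v, hv⟩ := hV2
      rw [← hd2 v hv]
      exact hdegpos v
    have hformula : G.cut S = (V₁ ∩ S).card * (d₁ - d₁') + (V₂ ∩ S).card * (d₂ - d₂') := by
      refine G.cut_formula S V₁ V₂ hdisj huniv hd1 hd2 ?_ ?_
      · intro u hu
        obtain ⟨h1, h2⟩ := Finset.mem_inter.mp hu
        rw [← G.induce_degree S ⟨u, h2⟩]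
        exact hdeg1 ⟨u, h2⟩ h1
      · intro u hu
        obtain ⟨h1, h2⟩ := Finset.mem_inter.mp hu
        rw [← G.induce_degree S ⟨u, h2⟩]
        exact hdeg2 ⟨u, h2⟩ h1
    have hle : G.edgeConn ≤ G.cut S := G.edgeConn_le_cut S ⟨s, hs⟩ ⟨t, ht⟩
    omega
end

section
/- There exists a vertex-transitive multigraph that is not maximally edge-connected: the multigraph obtained from the 4-cycle C₄ by replacing each edge of one pair of opposite edges with m ≥ 2 parallel edges satisfies λ(G) = 2 < m+1 = δ(G) and is vertex-transitive. -/
variable {V : Type*} [Fintype V] [DecidableEq V]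

open Multigraph


/-- The multigraph obtained from the 4-cycle `C₄` by replacing each edge of one pair of
opposite edges by `m` parallel edges. -/
def C4m (m : ℕ) : Multigraph (Fin 4) where
  mult u v :=
    (if (u.val = 0 ∧ v.val = 1) ∨ (u.val = 1 ∧ v.val = 0) ∨
        (u.val = 2 ∧ v.val = 3) ∨ (u.val = 3 ∧ v.val = 2) then m else 0) +
    (if (u.val = 1 ∧ v.val = 2) ∨ (u.val = 2 ∧ v.val = 1) ∨
        (u.val = 3 ∧ v.val = 0) ∨ (u.val = 0 ∧ v.val = 3) then 1 else 0)
  symm u v := by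
    try dsimp only
    congr 1 <;> exact if_congr (by tauto) rfl rfl
  loopless v := by
    try dsimp only
    rw [if_neg (by omega), if_neg (by omega)]


section Aux

/-- xor permutation on `Fin 4`. -/
def xorPerm (k : Fin 4) : Equiv.Perm (Fin 4) where
  toFun x := ⟨x.val ^^^ k.val, Nat.xor_lt_two_pow (n := 2) x.isLt k.isLt⟩
  invFun x := ⟨x.val ^^^ k.val, Nat.xor_lt_two_pow (n := 2) x.isLt k.isLt⟩
  left_inv x := by ext; exact xor_cancel_right _ _
  right_inv x := by ext; exact xor_cancel_right _ _

lemma xorAut (m : ℕ) (k : Fin 4) :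
    ∀ u v, (C4m m).mult (xorPerm k u) (xorPerm k v) = (C4m m).mult u v := by
  fin_cases k <;> intro u v <;> fin_cases u <;> fin_cases v <;> rfl

lemma conn_of (G : Multigraph (Fin 4)) (h01 : G.Adj 0 1) (h23 : G.Adj 2 3)
    (h : G.Adj 1 2 ∨ G.Adj 0 3) : G.Connected := by
  have symmA : ∀ a b, G.Adj a b → G.Adj b a := fun a b h => by
    unfold Multigraph.Adj at *; rw [G.symm]; exact h
  have step : ∀ a b : Fin 4, G.Adj a b → G.Reachable a b := fun a b h =>
    Relation.ReflTransGen.single h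
  have rsymm : ∀ a b, G.Reachable a b → G.Reachable b a := by
    intro a b h
    induction h with
    | refl => exact .refl
    | tail _ hadj ih => exact .trans (.single (symmA _ _ hadj)) ih
  have r0 : ∀ v : Fin 4, G.Reachable 0 v := by
    intro v
    have r01 : G.Reachable 0 1 := step _ _ h01
    rcases h with h12 | h03
    · have r02 : G.Reachable 0 2 := r01.trans (step _ _ h12)
      have r03 : G.Reachable 0 3 := r02.trans (step _ _ h23)
      fin_cases v
      · exact .refl
      · exact r01
      · exact r02
      · exact r03
    · have r03 : G.Reachable 0 3 := step _ _ h03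
      have r02 : G.Reachable 0 2 := r03.trans (step _ _ (symmA _ _ h23))
      fin_cases v
      · exact .refl
      · exact r01
      · exact r02
      · exact r03
  exact ⟨⟨0⟩, fun u v => (rsymm _ _ (r0 u)).trans (r0 v)⟩

/-- The edge set consisting of the two single edges of `C4m m`. -/
def cutF (m : ℕ) : (C4m m).EdgeSub where
  f u v := if (u.val = 1 ∧ v.val = 2) ∨ (u.val = 2 ∧ v.val = 1) ∨
      (u.val = 3 ∧ v.val = 0) ∨ (u.val = 0 ∧ v.val = 3) then 1 else 0
  symm u v := if_congr (by tauto) rfl rfl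
  le u v := by
    show _ ≤ (C4m m).mult u v
    unfold C4m
    dsimp only
    split_ifs <;> omega

lemma fv0 : ((0 : Fin 4)).val = 0 := rfl
lemma fv1 : ((1 : Fin 4)).val = 1 := rfl
lemma fv2 : ((2 : Fin 4)).val = 2 := rfl
lemma fv3 : ((3 : Fin 4)).val = 3 := rfl

end Aux

/-- `C4m m` (for `m ≥ 2`) is a vertex-transitive multigraph which is not maximally
edge-connected: `λ(G) = 2 < m + 1 = δ(G)`. -/
theorem C4m_vertexTransitive_not_maximallyEdgeConnected (m : ℕ) (hm : 2 ≤ m) :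
    (∀ u v : Fin 4, ∃ e : (C4m m).Aut, e.1 u = v) ∧
    (C4m m).edgeConn = 2 ∧ (C4m m).minDegree = m + 1 ∧
    (C4m m).edgeConn < (C4m m).minDegree := by
  constructor
  · -- vertex transitivity
    intro u v
    refine ⟨⟨xorPerm ⟨u.val ^^^ v.val, Nat.xor_lt_two_pow (n := 2) u.isLt v.isLt⟩,
      fun a b => xorAut m _ a b⟩, ?_⟩
    show (⟨u.val ^^^ (u.val ^^^ v.val), _⟩ : Fin 4) = v
    ext
    exact xor_cancel_left _ _
  have hdeg : ∀ v : Fin 4, (C4m m).degree v = m + 1 := by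
    intro v
    fin_cases v <;>
      simp [Multigraph.degree, C4m, Fin.sum_univ_four, fv0, fv1, fv2, fv3] <;> omega
  have hconn : (C4m m).edgeConn = 2 := by
    have hmem : (2 : ℕ) ∈ {n | ∃ F : (C4m m).EdgeSub, (C4m m).IsEdgeCut F ∧ F.card = n} := by
      refine ⟨cutF m, ?_, ?_⟩
      · -- it is an edge cut
        rintro ⟨-, hc⟩
        have key : ∀ u v : Fin 4,
            ((C4m m).deleteEdges (cutF m)).Adj u v → (u.val < 2 ↔ v.val < 2) := by
          intro u v h
          fin_cases u <;> fin_cases v <;> revert h <;>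
            simp [Multigraph.Adj, Multigraph.deleteEdges, cutF, C4m, fv0, fv1, fv2, fv3] <;> omega
        have inv : ∀ x : Fin 4,
            ((C4m m).deleteEdges (cutF m)).Reachable 0 x → x.val < 2 := by
          intro x h
          induction h with
          | refl => decide
          | tail _ hadj ih => exact (key _ _ hadj).mp ih
        exact absurd (inv 2 (hc 0 2)) (by decide)
      · -- its cardinality is 2
        show (∑ u, ∑ v, (cutF m).f u v) / 2 = 2
        have : (∑ u, ∑ v, (cutF m).f u v) = 4 := by
          simp [Fin.sum_univ_four, cutF, fv0, fv1, fv2, fv3]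
          decide
        omega
    refine le_antisymm (Nat.sInf_le hmem) (le_csInf ⟨2, hmem⟩ ?_)
    rintro n ⟨F, hcut, hcard⟩
    by_contra hlt
    push_neg at hlt
    apply hcut
    have hS : (∑ u, ∑ v, F.f u v) ≤ 3 := by
      have h2 : (∑ u, ∑ v, F.f u v) / 2 = n := hcard
      omega
    rw [Fin.sum_univ_four] at hS
    simp only [Fin.sum_univ_four] at hS
    have s01 := F.symm 0 1
    have s12 := F.symm 1 2
    have s23 := F.symm 2 3
    have s03 := F.symm 0 3
    have l12 : F.f 1 2 ≤ 1 := F.le 1 2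
    have l03 : F.f 0 3 ≤ 1 := F.le 0 3
    have h01 : F.f 0 1 ≤ 1 := by omega
    have h23 : F.f 2 3 ≤ 1 := by omega
    have hor : F.f 1 2 = 0 ∨ F.f 0 3 = 0 := by omega
    apply conn_of
    · show 0 < (C4m m).mult 0 1 - F.f 0 1
      have : (C4m m).mult 0 1 = m := rfl
      omega
    · show 0 < (C4m m).mult 2 3 - F.f 2 3
      have : (C4m m).mult 2 3 = m := rfl
      omega
    · rcases hor with h | h
      · left
        show 0 < (C4m m).mult 1 2 - F.f 1 2
        have : (C4m m).mult 1 2 = 1 := rfl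
        omega
      · right
        show 0 < (C4m m).mult 0 3 - F.f 0 3
        have : (C4m m).mult 0 3 = 1 := rfl
        omega
  have hmin : (C4m m).minDegree = m + 1 := by
    have hset : {n | ∃ v, (C4m m).degree v = n} = {m + 1} := by
      ext n
      simp only [Set.mem_setOf_eq, Set.mem_singleton_iff]
      constructor
      · rintro ⟨v, rfl⟩; exact hdeg v
      · rintro rfl; exact ⟨0, hdeg 0⟩
    rw [Multigraph.minDegree, hset, csInf_singleton]
  exact ⟨hconn, hmin, by omega⟩
end
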